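/- The function u ↦ Φ(u) − u² is concave on ℝ. -/

import Mathlib

/-- The adhesion potential `Φ` with threshold `u_*` (`us`) and slope parameter `σ`. -/
noncomputable def Phi (us σ : ℝ) (u : ℝ) : ℝ :=
  if |u| ≤ us - 1/σ then u^2
  else if us - 1/σ ≤ u ∧ u ≤ us then us*(us - 1/σ) - (us*σ - 1)*(us - u)^2
  else if -us ≤ u ∧ u ≤ -us + 1/σ then us*(us - 1/σ) - (us*σ - 1)*(us + u)^2
  else us*(us - 1/σ)

/-- Pointwise derivative of `u ↦ Phi u - u²`. -/
noncomputable def phiD (us σ : ℝ) (u : ℝ) : ℝ :=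
  if u ≤ -us then -2*u
  else if u ≤ -(us - 1/σ) then -2*(us*σ-1)*(us+u) - 2*u
  else if u ≤ us - 1/σ then 0
  else if u ≤ us then 2*(us*σ-1)*(us-u) - 2*u
  else -2*u

lemma quad_deriv (A B C u : ℝ) : HasDerivAt (fun x : ℝ => A + B*x + C*x^2) (B + 2*C*u) u := by
  have hx2 : HasDerivAt (fun x : ℝ => x^2) (2*u) u := by simpa using hasDerivAt_pow 2 u
  have h := (((hasDerivAt_id u).const_mul B).add (hx2.const_mul C)).const_add A
  have h' := h.congr_deriv (show B * 1 + C * (2 * u) = B + 2*C*u by ring)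
  refine h'.congr_of_eventuallyEq (Filter.Eventually.of_forall fun x => ?_)
  simp only [Pi.add_apply, id_eq]
  ring

lemma glue {f p q : ℝ → ℝ} {l c r y : ℝ} (hlc : l < c) (hcr : c < r)
    (hfp : ∀ x, l ≤ x → x ≤ c → f x = p x) (hfq : ∀ x, c ≤ x → x ≤ r → f x = q x)
    (hp : HasDerivAt p y c) (hq : HasDerivAt q y c) : HasDerivAt f y c := by
  have h1 : HasDerivWithinAt f y (Set.Icc l c) c :=
    (hp.hasDerivWithinAt).congr (fun x hx => hfp x hx.1 hx.2) (hfp c hlc.le le_rfl)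
  have h2 : HasDerivWithinAt f y (Set.Icc c r) c :=
    (hq.hasDerivWithinAt).congr (fun x hx => hfq x hx.1 hx.2) (hfq c le_rfl hcr.le)
  have h3 := h1.union h2
  rw [Set.Icc_union_Icc_eq_Icc hlc.le hcr.le] at h3
  exact h3.hasDerivAt (Icc_mem_nhds hlc hcr)

lemma onNbhd {f p : ℝ → ℝ} {s : Set ℝ} {c y : ℝ} (hs : s ∈ nhds c)
    (hfp : ∀ x ∈ s, f x = p x) (hp : HasDerivAt p y c) : HasDerivAt f y c :=
  hp.congr_of_eventuallyEq (Filter.eventuallyEq_of_mem hs hfp)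

set_option maxHeartbeats 1000000 in
lemma phiD_anti (us σ : ℝ) (hus : 0 < us) (hσ0 : 0 < σ) (hsa : 0 < us*σ - 1)
    (ha : 0 < us - 1/σ) (hinv : σ*(us - 1/σ) = us*σ - 1) (hσinv : σ * (1/σ) = 1) :
    ∀ x y : ℝ, x ≤ y → phiD us σ y ≤ phiD us σ x := by
  intro x y hxy
  unfold phiD
  split_ifs <;>
    nlinarith [hsa, ha, hus, hσ0, hinv, hσinv, mul_nonneg hsa.le (sub_nonneg.2 hxy),
      mul_pos hsa (show (0:ℝ) < 1/σ by positivity)]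

theorem Phi_sub_sq_concave (us σ : ℝ) (hus : 0 < us) (hσ : 1 < σ * us) :
    ConcaveOn ℝ Set.univ (fun u : ℝ => Phi us σ u - u^2) := by
  have hσ0 : 0 < σ := by
    by_contra h
    push_neg at h
    nlinarith [mul_nonpos_of_nonpos_of_nonneg h hus.le]
  have hsa : 0 < us*σ - 1 := by nlinarith
  have h1σ : 0 < 1/σ := by positivity
  have ha : 0 < us - 1/σ := by
    have h : us - 1/σ = (us*σ - 1)/σ := by field_simp
    rw [h]; positivity
  have hinv : σ*(us - 1/σ) = us*σ - 1 := by field_simp <;> ring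
  have hσinv : σ * (1/σ) = 1 := by field_simp
  -- region formulas
  have g1 : ∀ x : ℝ, x ≤ -us → Phi us σ x - x^2 = us*(us - 1/σ) - x^2 := by
    intro x hx
    have h : Phi us σ x = us*(us - 1/σ) := by
      unfold Phi
      split_ifs with h1 h2 h3
      · exfalso; rw [abs_le] at h1; linarith [h1.1]
      · exfalso; linarith [h2.1]
      · have hx0 : us + x = 0 := le_antisymm (by linarith) (by linarith [h3.1])
        rw [hx0]; ring
      · rfl
    rw [h]
  have g2 : ∀ x : ℝ, -us ≤ x → x ≤ -(us - 1/σ) →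
      Phi us σ x - x^2 = us*(us - 1/σ) - (us*σ-1)*(us+x)^2 - x^2 := by
    intro x hx1 hx2
    have h : Phi us σ x = us*(us - 1/σ) - (us*σ-1)*(us+x)^2 := by
      unfold Phi
      split_ifs with h1 h2 h3
      · rw [abs_le] at h1
        have hxe : x = -(us - 1/σ) := le_antisymm hx2 h1.1
        rw [hxe]; field_simp <;> ring
      · exfalso; linarith [h2.1]
      · rfl
      · exfalso; exact h3 ⟨hx1, by linarith⟩
    rw [h]
  have g3 : ∀ x : ℝ, -(us - 1/σ) ≤ x → x ≤ us - 1/σ → Phi us σ x - x^2 = 0 := by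
    intro x hx1 hx2
    have h : Phi us σ x = x^2 := by
      unfold Phi
      rw [if_pos (abs_le.2 ⟨hx1, hx2⟩)]
    rw [h]; ring
  have g4 : ∀ x : ℝ, us - 1/σ ≤ x → x ≤ us →
      Phi us σ x - x^2 = us*(us - 1/σ) - (us*σ-1)*(us-x)^2 - x^2 := by
    intro x hx1 hx2
    have h : Phi us σ x = us*(us - 1/σ) - (us*σ-1)*(us-x)^2 := by
      unfold Phi
      split_ifs with h1 h2
      · rw [abs_le] at h1
        have hxe : x = us - 1/σ := le_antisymm h1.2 hx1
        rw [hxe]; field_simp <;> ring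
      · rfl
      all_goals exact absurd ⟨hx1, hx2⟩ h2
    rw [h]
  have g5 : ∀ x : ℝ, us ≤ x → Phi us σ x - x^2 = us*(us - 1/σ) - x^2 := by
    intro x hx
    have h : Phi us σ x = us*(us - 1/σ) := by
      unfold Phi
      split_ifs with h1 h2 h3
      · exfalso; rw [abs_le] at h1; linarith [h1.2]
      · have hxe : x = us := le_antisymm h2.2 hx
        rw [hxe]; ring
      · exfalso; linarith [h3.2]
      · rfl
    rw [h]
  -- quadratic pieces
  have P1 : ∀ u : ℝ, HasDerivAt (fun x : ℝ => us*(us - 1/σ) - x^2) (-2*u) u := by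
    intro u
    have h := quad_deriv (us*(us - 1/σ)) 0 (-1) u
    convert h using 1
    · funext x; ring
    · ring
  have P2 : ∀ u : ℝ, HasDerivAt (fun x : ℝ => us*(us - 1/σ) - (us*σ-1)*(us+x)^2 - x^2)
      (-2*(us*σ-1)*(us+u) - 2*u) u := by
    intro u
    have h := quad_deriv (us*(us - 1/σ) - (us*σ-1)*us^2) (-2*(us*σ-1)*us) (-(us*σ-1) - 1) u
    convert h using 1
    · funext x; ring
    · ring
  have P4 : ∀ u : ℝ, HasDerivAt (fun x : ℝ => us*(us - 1/σ) - (us*σ-1)*(us-x)^2 - x^2)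
      (2*(us*σ-1)*(us-u) - 2*u) u := by
    intro u
    have h := quad_deriv (us*(us - 1/σ) - (us*σ-1)*us^2) (2*(us*σ-1)*us) (-(us*σ-1) - 1) u
    convert h using 1
    · funext x; ring
    · ring
  have P0 : ∀ u : ℝ, HasDerivAt (fun _ : ℝ => (0:ℝ)) 0 u := fun u => hasDerivAt_const u 0
  -- the key derivative statement
  have key : ∀ u : ℝ, HasDerivAt (fun x : ℝ => Phi us σ x - x^2) (phiD us σ u) u := by
    intro u
    rcases lt_trichotomy u (-us) with h1 | h1 | h1
    · have hv : phiD us σ u = -2*u := by unfold phiD; rw [if_pos h1.le]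
      rw [hv]
      exact onNbhd (Iio_mem_nhds h1) (fun x hx => g1 x (le_of_lt hx)) (P1 u)
    · have hv : phiD us σ u = -2*u := by unfold phiD; rw [if_pos h1.le]
      rw [hv, h1]
      have hq := P2 (-us)
      rw [show -2*(us*σ-1)*(us + -us) - 2*(-us) = -2 * -us from by ring] at hq
      exact glue (show -us - 1 < -us by linarith) (show -us < -(us - 1/σ) by linarith)
        (fun x _ hx => g1 x hx) g2 (P1 (-us)) hq
    rcases lt_trichotomy u (-(us - 1/σ)) with h2 | h2 | h2
    · have hv : phiD us σ u = -2*(us*σ-1)*(us+u) - 2*u := by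
        unfold phiD; rw [if_neg (by linarith), if_pos h2.le]
      rw [hv]
      exact onNbhd (Ioo_mem_nhds h1 h2) (fun x hx => g2 x hx.1.le hx.2.le) (P2 u)
    · have hv : phiD us σ u = 0 := by
        unfold phiD
        rw [if_neg (by linarith), if_pos h2.le, h2]
        field_simp <;> ring
      rw [hv, h2]
      have hp := P2 (-(us - 1/σ))
      rw [show -2*(us*σ-1)*(us + -(us - 1/σ)) - 2*(-(us - 1/σ)) = (0:ℝ) from by
        field_simp <;> ring] at hp
      exact glue (show -us < -(us - 1/σ) by linarith) (show -(us - 1/σ) < us - 1/σ by linarith)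
        g2 g3 hp (P0 _)
    rcases lt_trichotomy u (us - 1/σ) with h3 | h3 | h3
    · have hv : phiD us σ u = 0 := by
        unfold phiD; rw [if_neg (by linarith), if_neg (by linarith), if_pos h3.le]
      rw [hv]
      exact onNbhd (Ioo_mem_nhds h2 h3) (fun x hx => g3 x hx.1.le hx.2.le) (P0 u)
    · have hv : phiD us σ u = 0 := by
        unfold phiD; rw [if_neg (by linarith), if_neg (by linarith), if_pos h3.le]
      rw [hv, h3]
      have hq := P4 (us - 1/σ)
      rw [show 2*(us*σ-1)*(us - (us - 1/σ)) - 2*(us - 1/σ) = (0:ℝ) from by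
        field_simp <;> ring] at hq
      exact glue (show -(us - 1/σ) < us - 1/σ by linarith) (show us - 1/σ < us by linarith)
        g3 g4 (P0 _) hq
    rcases lt_trichotomy u us with h4 | h4 | h4
    · have hv : phiD us σ u = 2*(us*σ-1)*(us-u) - 2*u := by
        unfold phiD; rw [if_neg (by linarith), if_neg (by linarith), if_neg (by linarith),
          if_pos h4.le]
      rw [hv]
      exact onNbhd (Ioo_mem_nhds h3 h4) (fun x hx => g4 x hx.1.le hx.2.le) (P4 u)
    · have hv : phiD us σ u = -2*us := by
        unfold phiD
        rw [if_neg (by linarith), if_neg (by linarith), if_neg (by linarith), if_pos h4.le, h4]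
        try ring
      rw [hv, h4]
      have hp := P4 us
      rw [show 2*(us*σ-1)*(us - us) - 2*us = -2*us from by ring] at hp
      have hq := P1 us
      exact glue (show us - 1/σ < us by linarith) (show us < us + 1 by linarith)
        g4 (fun x hx _ => g5 x hx) hp hq
    · have hv : phiD us σ u = -2*u := by
        unfold phiD
        rw [if_neg (by linarith), if_neg (by linarith), if_neg (by linarith),
          if_neg (by linarith)]
      rw [hv]
      exact onNbhd (Ioi_mem_nhds h4) (fun x hx => g5 x (le_of_lt hx)) (P1 u)
  apply AntitoneOn.concaveOn_of_deriv convex_univ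
  · exact fun u _ => (key u).differentiableAt.continuousAt.continuousWithinAt
  · rw [interior_univ]
    exact fun u _ => (key u).differentiableAt.differentiableWithinAt
  · rw [interior_univ]
    intro x _ y _ hxy
    rw [(key x).deriv, (key y).deriv]
    exact phiD_anti us σ hus hσ0 hsa ha hinv hσinv x y hxy
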